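/- arXiv:2604.15526 — 3 statements merged into one kernel-verified Lean document; each statement's English description precedes it below -/
import Mathlib

section
/- Suppose μ > 0, C := 2θ(1−ϑ)²μ with θ, ϑ ∈ (0,1), γ > 0 satisfies γ ≤ 1/(2(1−ϑ)²μ), and let a ∈ (0,1), γ_prev > 0 satisfy a²/γ_prev > C. Define F(α) := α²/γ − (1−α)·a²/γ_prev − Cα. Then F(0) < 0 and F(1) > 0, so F has a root in (0,1); moreover any root α ∈ (0,1) of F satisfies α²/γ > C, i.e., α > (1−ϑ)√(2θμγ). -/
theorem stmt_4 (μ θ ϑ γ γp a : ℝ) (hμ : 0 < μ) (hθ : θ ∈ Set.Ioo (0 : ℝ) 1)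
    (hϑ : ϑ ∈ Set.Ioo (0 : ℝ) 1) (hγ : 0 < γ) (hγmax : γ ≤ 1 / (2 * (1 - ϑ) ^ 2 * μ))
    (hγp : 0 < γp) (ha : a ∈ Set.Ioo (0 : ℝ) 1)
    (hap : a ^ 2 / γp > 2 * θ * (1 - ϑ) ^ 2 * μ) :
    (fun α : ℝ => α ^ 2 / γ - (1 - α) * a ^ 2 / γp - (2 * θ * (1 - ϑ) ^ 2 * μ) * α) 0 < 0 ∧
    0 < (fun α : ℝ => α ^ 2 / γ - (1 - α) * a ^ 2 / γp - (2 * θ * (1 - ϑ) ^ 2 * μ) * α) 1 ∧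
    (∃ α ∈ Set.Ioo (0 : ℝ) 1,
      α ^ 2 / γ - (1 - α) * a ^ 2 / γp - (2 * θ * (1 - ϑ) ^ 2 * μ) * α = 0) ∧
    (∀ α ∈ Set.Ioo (0 : ℝ) 1,
      α ^ 2 / γ - (1 - α) * a ^ 2 / γp - (2 * θ * (1 - ϑ) ^ 2 * μ) * α = 0 →
      α ^ 2 / γ > 2 * θ * (1 - ϑ) ^ 2 * μ ∧ α > (1 - ϑ) * Real.sqrt (2 * θ * μ * γ)) := by
  obtain ⟨hθ0, hθ1⟩ := hθ
  obtain ⟨hϑ0, hϑ1⟩ := hϑ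
  obtain ⟨ha0, ha1⟩ := ha
  have hv : (0:ℝ) < (1 - ϑ) ^ 2 := pow_pos (by linarith) 2
  have hX : (0:ℝ) < 2 * (1 - ϑ) ^ 2 * μ := by nlinarith
  have hγinv : 2 * (1 - ϑ) ^ 2 * μ ≤ 1 / γ := by
    rw [le_div_iff₀ hγ]
    calc 2 * (1 - ϑ) ^ 2 * μ * γ ≤ 2 * (1 - ϑ) ^ 2 * μ * (1 / (2 * (1 - ϑ) ^ 2 * μ)) := by
          exact mul_le_mul_of_nonneg_left hγmax hX.le
      _ = 1 := by field_simp
  have hF0 : (0:ℝ) ^ 2 / γ - (1 - 0) * a ^ 2 / γp - (2 * θ * (1 - ϑ) ^ 2 * μ) * 0 < 0 := by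
    have : 0 < a ^ 2 / γp := by positivity
    simp; linarith [this]
  have hF1 : 0 < (1:ℝ) ^ 2 / γ - (1 - 1) * a ^ 2 / γp - (2 * θ * (1 - ϑ) ^ 2 * μ) * 1 := by
    have hC : 2 * θ * (1 - ϑ) ^ 2 * μ < 2 * (1 - ϑ) ^ 2 * μ := by nlinarith
    rw [one_div] at hγinv
    simp; linarith
  refine ⟨hF0, hF1, ?_, ?_⟩
  · have hcont : ContinuousOn
        (fun α : ℝ => α ^ 2 / γ - (1 - α) * a ^ 2 / γp - (2 * θ * (1 - ϑ) ^ 2 * μ) * α)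
        (Set.Icc 0 1) := by
      apply Continuous.continuousOn; continuity
    have := intermediate_value_Ioo (α := ℝ) (a := (0:ℝ)) (b := 1) zero_le_one hcont
    have h0mem : (0:ℝ) ∈ Set.Ioo
        ((fun α : ℝ => α ^ 2 / γ - (1 - α) * a ^ 2 / γp - (2 * θ * (1 - ϑ) ^ 2 * μ) * α) 0)
        ((fun α : ℝ => α ^ 2 / γ - (1 - α) * a ^ 2 / γp - (2 * θ * (1 - ϑ) ^ 2 * μ) * α) 1) :=
      ⟨hF0, hF1⟩
    obtain ⟨α, hα, heq⟩ := this h0mem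
    exact ⟨α, hα, heq⟩
  · rintro α ⟨hα0, hα1⟩ heq
    have h1 : α ^ 2 / γ > 2 * θ * (1 - ϑ) ^ 2 * μ := by
      have h2 : (1 - α) * (a ^ 2 / γp) > (1 - α) * (2 * θ * (1 - ϑ) ^ 2 * μ) :=
        mul_lt_mul_of_pos_left hap (by linarith)
      have h3 : (1 - α) * a ^ 2 / γp = (1 - α) * (a ^ 2 / γp) := by ring
      nlinarith
    refine ⟨h1, ?_⟩
    have hkey : ((1 - ϑ) * Real.sqrt (2 * θ * μ * γ)) ^ 2 < α ^ 2 := by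
      have hs : Real.sqrt (2 * θ * μ * γ) ^ 2 = 2 * θ * μ * γ :=
        Real.sq_sqrt (by positivity)
      have : α ^ 2 > (2 * θ * (1 - ϑ) ^ 2 * μ) * γ := by
        have := (lt_div_iff₀ hγ).mp (by linarith [h1] : 2 * θ * (1 - ϑ) ^ 2 * μ < α ^ 2 / γ)
        linarith
      rw [mul_pow, hs]; nlinarith
    have hnn : 0 ≤ α := hα0.le
    exact lt_of_pow_lt_pow_left₀ 2 hnn hkey
end

section
/- Let (α_i)_{i=0}^{t} ⊂ (0,1), (γ_i)_{i=0}^{t} ⊂ (0,∞), and (Θ_i)_{i=1}^{t} ∈ {0,1}, such that whenever Θ_i = 1 we have α_i²/γ_i = (1−α_i)·α_{i−1}²/γ_{i−1}, and whenever Θ_i = 0 we have (α_i, γ_i) = (α_{i−1}, γ_{i−1}). Set λ_t := ∏_{i=1}^t (1 − Θ_i α_i). Then (1 + (α_0/√γ_0)·Σ_{i=1}^t Θ_i √γ_i)^{−2} ≤ λ_t ≤ (1 + (α_0/(2√γ_0))·Σ_{i=1}^t Θ_i √γ_i)^{−2}. -/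
set_option maxHeartbeats 1000000 in
theorem stmt_7 (t : ℕ) (ht : 0 < t) (α γ Θ : ℕ → ℝ)
    (hα : ∀ i ≤ t, α i ∈ Set.Ioo (0 : ℝ) 1) (hγ : ∀ i ≤ t, 0 < γ i)
    (hΘ : ∀ i, 1 ≤ i → i ≤ t → Θ i = 0 ∨ Θ i = 1)
    (hrec : ∀ i, 1 ≤ i → i ≤ t → Θ i = 1 →
      (α i) ^ 2 / γ i = (1 - α i) * (α (i - 1)) ^ 2 / γ (i - 1))
    (hcarry : ∀ i, 1 ≤ i → i ≤ t → Θ i = 0 → α i = α (i - 1) ∧ γ i = γ (i - 1)) :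
    (1 + (α 0 / Real.sqrt (γ 0)) * ∑ i ∈ Finset.Icc 1 t, Θ i * Real.sqrt (γ i)) ^ (-(2 : ℤ))
      ≤ ∏ i ∈ Finset.Icc 1 t, (1 - Θ i * α i) ∧
    ∏ i ∈ Finset.Icc 1 t, (1 - Θ i * α i)
      ≤ (1 + (α 0 / (2 * Real.sqrt (γ 0))) *
          ∑ i ∈ Finset.Icc 1 t, Θ i * Real.sqrt (γ i)) ^ (-(2 : ℤ)) := by
  have hα0 : 0 < α 0 := (hα 0 (Nat.zero_le t)).1
  have sγ0 : 0 < Real.sqrt (γ 0) := Real.sqrt_pos.2 (hγ 0 (Nat.zero_le t))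
  set b : ℕ → ℝ := fun k => α 0 * Real.sqrt (γ k) / (α k * Real.sqrt (γ 0)) with hbdef
  have key : ∀ k, k ≤ t →
      (∏ i ∈ Finset.Icc 1 k, (1 - Θ i * α i)) = ((b k)⁻¹) ^ 2 ∧
      1 + (α 0 / (2 * Real.sqrt (γ 0))) * ∑ i ∈ Finset.Icc 1 k, Θ i * Real.sqrt (γ i) ≤ b k ∧
      b k ≤ 1 + (α 0 / Real.sqrt (γ 0)) * ∑ i ∈ Finset.Icc 1 k, Θ i * Real.sqrt (γ i) := by
    intro k
    induction k with
    | zero =>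
      intro _
      have hb0 : b 0 = 1 := by
        simp only [hbdef]
        exact div_self (ne_of_gt (mul_pos hα0 sγ0))
      simp [hb0]
    | succ n ihn =>
      intro hn
      obtain ⟨h1, h2, h3⟩ := ihn (le_trans (Nat.le_succ n) hn)
      have hn1 : 1 ≤ n + 1 := by omega
      have hnt : n + 1 ≤ t := hn
      have hαn1 := hα (n+1) hnt
      have hγn1 := hγ (n+1) hnt
      have hαn := hα n (by omega)
      have hγn := hγ n (by omega)
      have sγn1 : 0 < Real.sqrt (γ (n+1)) := Real.sqrt_pos.2 hγn1
      have sγn : 0 < Real.sqrt (γ n) := Real.sqrt_pos.2 hγn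
      have hbn1pos : 0 < b (n+1) := by
        simp only [hbdef]
        exact div_pos (mul_pos hα0 sγn1) (mul_pos hαn1.1 sγ0)
      have hbnpos : 0 < b n := by
        simp only [hbdef]
        exact div_pos (mul_pos hα0 sγn) (mul_pos hαn.1 sγ0)
      rw [Finset.prod_Icc_succ_top hn1, Finset.sum_Icc_succ_top hn1]
      rcases hΘ (n+1) hn1 hnt with h0 | hθ1
      · obtain ⟨ha, hg⟩ := hcarry (n+1) hn1 hnt h0
        simp only [Nat.add_sub_cancel] at ha hg
        have hbeq : b (n+1) = b n := by simp only [hbdef, ha, hg]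
        rw [h0, hbeq]
        refine ⟨by rw [h1]; ring, by linarith [h2], by linarith [h3]⟩
      · -- accepted step
        have hrec1 := hrec (n+1) hn1 hnt hθ1
        simp only [Nat.add_sub_cancel] at hrec1
        set a := α (n+1) with hadef
        have ha0 : 0 < a := hαn1.1
        have ha1 : a < 1 := hαn1.2
        set s := Real.sqrt (1 - a) with hsdef
        have hs0 : 0 < s := Real.sqrt_pos.2 (by linarith)
        have hs2 : s ^ 2 = 1 - a := Real.sq_sqrt (by linarith)
        have hs1 : s < 1 := by nlinarith [hs2, sq_nonneg (1 - s)]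
        have hbne : b (n+1) ≠ 0 := ne_of_gt hbn1pos
        have hsne : s ≠ 0 := ne_of_gt hs0
        have e1 : Real.sqrt (γ n) ^ 2 = γ n := Real.sq_sqrt hγn.le
        have e2 : Real.sqrt (γ (n+1)) ^ 2 = γ (n+1) := Real.sq_sqrt hγn1.le
        have hcross : a ^ 2 * γ n = (1 - a) * α n ^ 2 * γ (n+1) := by
          field_simp at hrec1
          linarith [hrec1]
        -- key relation: b n = b (n+1) * s
        have hbs : b n = b (n+1) * s := by
          have hx : Real.sqrt (γ n) * a = Real.sqrt (γ (n+1)) * s * α n := by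
            have hsq : (Real.sqrt (γ n) * a) ^ 2 = (Real.sqrt (γ (n+1)) * s * α n) ^ 2 := by
              rw [mul_pow, mul_pow, mul_pow, e1, e2, hs2]
              linear_combination hcross
            have hx1 : (0:ℝ) ≤ Real.sqrt (γ n) * a := mul_nonneg sγn.le ha0.le
            have hx2 : (0:ℝ) ≤ Real.sqrt (γ (n+1)) * s * α n :=
              mul_nonneg (mul_nonneg sγn1.le hs0.le) hαn.1.le
            have := congrArg Real.sqrt hsq
            rwa [Real.sqrt_sq hx1, Real.sqrt_sq hx2] at this
          simp only [hbdef]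
          rw [div_mul_eq_mul_div, div_eq_div_iff (mul_pos hαn.1 sγ0).ne' (mul_pos hαn1.1 sγ0).ne']
          linear_combination (α 0 * Real.sqrt (γ 0)) * hx
        have hbexp : b (n+1) * (a * Real.sqrt (γ 0)) = α 0 * Real.sqrt (γ (n+1)) := by
          simp only [hbdef]
          exact div_mul_cancel₀ _ (ne_of_gt (mul_pos ha0 sγ0))
        refine ⟨?_, ?_, ?_⟩
        · rw [h1, hθ1, hbs]
          have hss : (1 : ℝ) - 1 * a = s ^ 2 := by rw [hs2]; ring
          rw [hss]
          field_simp
        · rw [hθ1]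
          have hdiff : α 0 / (2 * Real.sqrt (γ 0)) * Real.sqrt (γ (n+1)) ≤ b (n+1) - b n := by
            rw [hbs]
            have h' : b (n+1) - b (n+1) * s = b (n+1) * (1 - s) := by ring
            have hr2 : α 0 / (2 * Real.sqrt (γ 0)) * Real.sqrt (γ (n+1)) = b (n+1) * a / 2 := by
              have hane : a ≠ 0 := ne_of_gt ha0
              have hg0ne : Real.sqrt (γ 0) ≠ 0 := ne_of_gt sγ0
              simp only [hbdef]
              rw [← hadef]
              field_simp
            rw [h', hr2]
            nlinarith [mul_nonneg hbn1pos.le (sq_nonneg (1 - s)), hs2]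
          calc 1 + α 0 / (2 * Real.sqrt (γ 0)) *
                (∑ i ∈ Finset.Icc 1 n, Θ i * Real.sqrt (γ i) + 1 * Real.sqrt (γ (n+1)))
              = (1 + α 0 / (2 * Real.sqrt (γ 0)) * ∑ i ∈ Finset.Icc 1 n, Θ i * Real.sqrt (γ i))
                + α 0 / (2 * Real.sqrt (γ 0)) * Real.sqrt (γ (n+1)) := by ring
            _ ≤ b n + (b (n+1) - b n) := add_le_add h2 hdiff
            _ = b (n+1) := by ring
        · rw [hθ1]
          have hdiff : b (n+1) - b n ≤ α 0 / Real.sqrt (γ 0) * Real.sqrt (γ (n+1)) := by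
            rw [hbs]
            have h' : b (n+1) - b (n+1) * s = b (n+1) * (1 - s) := by ring
            have hr : α 0 / Real.sqrt (γ 0) * Real.sqrt (γ (n+1)) = b (n+1) * a := by
              have hane : a ≠ 0 := ne_of_gt ha0
              have hg0ne : Real.sqrt (γ 0) ≠ 0 := ne_of_gt sγ0
              simp only [hbdef]
              rw [← hadef]
              field_simp
            rw [h', hr]
            nlinarith [hs2, mul_nonneg hbn1pos.le (mul_nonneg hs0.le (sub_nonneg.2 hs1.le))]
          calc b (n+1) = b n + (b (n+1) - b n) := by ring
            _ ≤ (1 + α 0 / Real.sqrt (γ 0) * ∑ i ∈ Finset.Icc 1 n, Θ i * Real.sqrt (γ i))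
                + α 0 / Real.sqrt (γ 0) * Real.sqrt (γ (n+1)) := add_le_add h3 hdiff
            _ = 1 + α 0 / Real.sqrt (γ 0) *
                (∑ i ∈ Finset.Icc 1 n, Θ i * Real.sqrt (γ i) + 1 * Real.sqrt (γ (n+1))) := by ring
  obtain ⟨h1, h2, h3⟩ := key t le_rfl
  have hSnn : 0 ≤ ∑ i ∈ Finset.Icc 1 t, Θ i * Real.sqrt (γ i) := by
    apply Finset.sum_nonneg
    intro i hi
    simp only [Finset.mem_Icc] at hi
    rcases hΘ i hi.1 hi.2 with h | h <;> rw [h]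
    · simp
    · simpa using Real.sqrt_nonneg (γ i)
  set S := ∑ i ∈ Finset.Icc 1 t, Θ i * Real.sqrt (γ i)
  have hL1 : (1:ℝ) ≤ 1 + α 0 / (2 * Real.sqrt (γ 0)) * S := by
    have h' : 0 ≤ α 0 / (2 * Real.sqrt (γ 0)) * S :=
      mul_nonneg (div_nonneg hα0.le (by positivity)) hSnn
    linarith
  have hbt : 0 < b t := lt_of_lt_of_le one_pos (le_trans hL1 h2)
  have hU0 : (0:ℝ) < 1 + α 0 / Real.sqrt (γ 0) * S := by
    have h' : 0 ≤ α 0 / Real.sqrt (γ 0) * S :=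
      mul_nonneg (div_nonneg hα0.le (Real.sqrt_nonneg _)) hSnn
    linarith
  have hLpos : (0:ℝ) < 1 + α 0 / (2 * Real.sqrt (γ 0)) * S := lt_of_lt_of_le one_pos hL1
  rw [h1]
  constructor
  · rw [zpow_neg, zpow_two, pow_two, ← mul_inv]
    apply inv_anti₀ (mul_pos hbt hbt)
    exact mul_le_mul h3 h3 hbt.le hU0.le
  · rw [zpow_neg, zpow_two, pow_two, ← mul_inv]
    apply inv_anti₀ (mul_pos hLpos hLpos)
    exact mul_le_mul h2 h2 hLpos.le hbt.le
end

section
/- Let φ: ℝᵈ → ℝ be L-smooth (i.e., φ(z) ≤ φ(y) + ⟪∇φ(y), z − y⟫ + (L/2)‖z − y‖² for all y, z), let θ ∈ (0,1), ϑ ∈ [0,1), let G ∈ ℝᵈ satisfy ‖G − ∇φ(y)‖ ≤ ϑ‖∇φ(y)‖, and let 0 < γ ≤ 2(1 − 2ϑ − θ(1−ϑ))/(L(1−ϑ)) with 1 − 2ϑ − θ(1−ϑ) > 0. Then φ(y − γG) ≤ φ(y) − θγ‖G‖². -/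
open RealInnerProductSpace

theorem stmt_14 {E : Type*} [NormedAddCommGroup E] [InnerProductSpace ℝ E]
    (φ : E → ℝ) (g : E → E) (L : ℝ) (hL : 0 < L)
    (hsmooth : ∀ y z : E, φ z ≤ φ y + ⟪g y, z - y⟫ + (L / 2) * ‖z - y‖ ^ 2)
    (θ ϑ : ℝ) (hθ : θ ∈ Set.Ioo (0 : ℝ) 1) (hϑ0 : 0 ≤ ϑ) (hϑ1 : ϑ < 1)
    (hpos : 0 < 1 - 2 * ϑ - θ * (1 - ϑ))
    (y G : E) (hG : ‖G - g y‖ ≤ ϑ * ‖g y‖)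
    (γ : ℝ) (hγ0 : 0 < γ) (hγ : γ ≤ 2 * (1 - 2 * ϑ - θ * (1 - ϑ)) / (L * (1 - ϑ))) :
    φ (y - γ • G) ≤ φ y - θ * γ * ‖G‖ ^ 2 := by
  have hϑ1' : 0 < 1 - ϑ := by linarith
  -- bound ‖g y‖ by ‖G‖/(1-ϑ)
  have hgy : (1 - ϑ) * ‖g y‖ ≤ ‖G‖ := by
    have h1 : ‖g y‖ - ‖G‖ ≤ ‖G - g y‖ := by
      have := norm_sub_norm_le (g y) G
      rw [← norm_neg (g y - G)] at this
      simpa using this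
    nlinarith [hG]
  -- lower bound on inner product
  have hinner : (1 - 2 * ϑ) / (1 - ϑ) * ‖G‖ ^ 2 ≤ ⟪g y, G⟫ := by
    have h2 : ⟪g y, G⟫ = ‖G‖ ^ 2 - ⟪G - g y, G⟫ := by
      rw [inner_sub_left, real_inner_self_eq_norm_sq]; ring
    have h3 : ⟪G - g y, G⟫ ≤ ϑ * ‖g y‖ * ‖G‖ := by
      calc ⟪G - g y, G⟫ ≤ ‖G - g y‖ * ‖G‖ := real_inner_le_norm _ _
        _ ≤ ϑ * ‖g y‖ * ‖G‖ := by
            exact mul_le_mul_of_nonneg_right hG (norm_nonneg _)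
    have h4 : ϑ * ‖g y‖ * ‖G‖ ≤ ϑ / (1 - ϑ) * ‖G‖ ^ 2 := by
      rw [div_mul_eq_mul_div, le_div_iff₀ hϑ1']
      have h5 := mul_le_mul_of_nonneg_right hgy (norm_nonneg G)
      nlinarith [norm_nonneg G, norm_nonneg (g y)]
    rw [h2]
    have : (1 - 2 * ϑ) / (1 - ϑ) * ‖G‖ ^ 2 = ‖G‖ ^ 2 - ϑ / (1 - ϑ) * ‖G‖ ^ 2 := by
      field_simp; ring
    linarith [this]
  -- use smoothness at z = y - γ • G
  have hs := hsmooth y (y - γ • G)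
  have hz : (y - γ • G) - y = -(γ • G) := by abel
  rw [hz] at hs
  have hin : ⟪g y, -(γ • G)⟫ = -(γ * ⟪g y, G⟫) := by
    rw [inner_neg_right, real_inner_smul_right]
  have hn : ‖-(γ • G)‖ ^ 2 = γ ^ 2 * ‖G‖ ^ 2 := by
    rw [norm_neg, norm_smul, mul_pow, Real.norm_eq_abs, sq_abs]
  rw [hin, hn] at hs
  -- step size bound
  have hstep : L * γ / 2 ≤ (1 - 2 * ϑ) / (1 - ϑ) - θ := by
    have hLϑ : 0 < L * (1 - ϑ) := by positivity
    have hγ' : γ * (L * (1 - ϑ)) ≤ 2 * (1 - 2 * ϑ - θ * (1 - ϑ)) :=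
      (le_div_iff₀ hLϑ).mp hγ
    have heq : (1 - 2 * ϑ) / (1 - ϑ) - θ = (1 - 2 * ϑ - θ * (1 - ϑ)) / (1 - ϑ) := by
      field_simp
    rw [heq, div_le_div_iff₀ (by norm_num) hϑ1']
    nlinarith
  nlinarith [hs, mul_le_mul_of_nonneg_left hinner hγ0.le,
    mul_le_mul_of_nonneg_right hstep (mul_nonneg hγ0.le (sq_nonneg ‖G‖)),
    sq_nonneg ‖G‖]
end
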